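/- Invariance under equiconjugacies: Let (X,T) and (Y,R) be NDSs, Z ⊂ X_0, and let g be an equicontinuous potential on Y. For each pressure P ∈ {Q_low, Q_up, P_low, P_up, P^B, P^P}: (1) if π = {π_k} is an equisemiconjugacy from (X,T) to (Y,R), then P(T, π*g, Z) ≥ P(R, g, π_0(Z)); (2) if π is an equiconjugacy, then P(T, π*g, Z) = P(R, g, π_0(Z)). -/

import Mathlib

open Filter Set
open scoped ENNReal NNReal

noncomputable section

namespace NDS

variable {X : ℕ → Type*}

/-- The orbit maps `T_k^j : X k → X (k+j)` of a nonautonomous system. -/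
def iterFrom (T : ∀ k, X k → X (k + 1)) (k : ℕ) : ∀ j, X k → X (k + j)
  | 0 => fun x => x
  | j + 1 => fun x => T (k + j) (iterFrom T k j x)

/-- The orbit maps `T^j = T_{j-1} ∘ ⋯ ∘ T_0 : X 0 → X j`. -/
def iter (T : ∀ k, X k → X (k + 1)) : ∀ j, X 0 → X j
  | 0 => fun x => x
  | j + 1 => fun x => T j (iter T j x)

variable [∀ k, MetricSpace (X k)]

/-- The `n`-th Bowen metric on `X 0`:  `d_n^T(x,y) = max_{0 ≤ j ≤ n-1} d_j (T^j x) (T^j y)`. -/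
def bowenDist (T : ∀ k, X k → X (k + 1)) (n : ℕ) (x y : X 0) : ℝ :=
  (((Finset.range n).sup fun j => nndist (iter T j x) (iter T j y) : ℝ≥0) : ℝ)

/-- The open Bowen ball `B_n^T(x, ε)`. -/
def bowenBall (T : ∀ k, X k → X (k + 1)) (n : ℕ) (x : X 0) (ε : ℝ) : Set (X 0) :=
  {y | bowenDist T n x y < ε}

/-- The closed Bowen ball `clB_n^T(x, ε)`. -/
def bowenClosedBall (T : ∀ k, X k → X (k + 1)) (n : ℕ) (x : X 0) (ε : ℝ) : Set (X 0) :=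
  {y | bowenDist T n x y ≤ ε}

/-- Birkhoff sums starting at level `k`:  `S_{k,n}^T f = Σ_{j<n} f_{k+j} ∘ T_k^j`. -/
def birkFrom (T : ∀ k, X k → X (k + 1)) (f : ∀ k, X k → ℝ) (k n : ℕ) (x : X k) : ℝ :=
  ∑ j ∈ Finset.range n, f (k + j) (iterFrom T k j x)

/-- Birkhoff sums `S_n^T f = Σ_{j<n} f_j ∘ T^j` on `X 0`. -/
def birk (T : ∀ k, X k → X (k + 1)) (f : ∀ k, X k → ℝ) (n : ℕ) (x : X 0) : ℝ :=
  ∑ j ∈ Finset.range n, f j (iter T j x)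

/-- A potential `f = {f_k}` is equicontinuous. -/
def EquicontPotential (f : ∀ k, X k → ℝ) : Prop :=
  ∀ ε : ℝ, 0 < ε → ∃ δ : ℝ, 0 < δ ∧
    ∀ k, ∀ x y : X k, dist x y < δ → |f k x - f k y| < ε

/-- The sequence of maps `T = {T_k}` is equicontinuous. -/
def EquicontMaps (T : ∀ k, X k → X (k + 1)) : Prop :=
  ∀ ε : ℝ, 0 < ε → ∃ δ : ℝ, 0 < δ ∧
    ∀ k, ∀ x y : X k, dist x y < δ → dist (T k x) (T k y) < ε

/-- `F` is an `(n,ε)`-spanning set for `Z`. -/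
def IsSpanning (T : ∀ k, X k → X (k + 1)) (n : ℕ) (ε : ℝ) (Z : Set (X 0))
    (F : Finset (X 0)) : Prop :=
  ∀ x ∈ Z, ∃ y ∈ F, bowenDist T n x y ≤ ε

/-- `E` is an `(n,ε)`-separated set for `Z`. -/
def IsSeparated (T : ∀ k, X k → X (k + 1)) (n : ℕ) (ε : ℝ) (Z : Set (X 0))
    (E : Finset (X 0)) : Prop :=
  ↑E ⊆ Z ∧ ∀ x ∈ E, ∀ y ∈ E, x ≠ y → ε < bowenDist T n x y

/-- The partition sum `Σ_{x ∈ F} e^{S_n^T f(x)}` (valued in `ℝ≥0∞`). -/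
def partSum (T : ∀ k, X k → X (k + 1)) (f : ∀ k, X k → ℝ) (n : ℕ) (F : Finset (X 0)) : ℝ≥0∞ :=
  ∑ x ∈ F, ENNReal.ofReal (Real.exp (birk T f n x))

/-- `Q_n(T,f,Z,ε)`, infimum over `(n,ε)`-spanning sets. -/
def Qn (T : ∀ k, X k → X (k + 1)) (f : ∀ k, X k → ℝ) (Z : Set (X 0)) (n : ℕ) (ε : ℝ) : ℝ≥0∞ :=
  ⨅ (F : Finset (X 0)) (_ : IsSpanning T n ε Z F), partSum T f n F

/-- `P_n(T,f,Z,ε)`, supremum over `(n,ε)`-separated sets. -/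
def Pn (T : ∀ k, X k → X (k + 1)) (f : ∀ k, X k → ℝ) (Z : Set (X 0)) (n : ℕ) (ε : ℝ) : ℝ≥0∞ :=
  ⨆ (E : Finset (X 0)) (_ : IsSeparated T n ε Z E), partSum T f n E

/-- `liminf_n (1/n) log u n` (in `EReal`). -/
def lowRate (u : ℕ → ℝ≥0∞) : EReal :=
  Filter.atTop.liminf fun n : ℕ => (((n : ℝ)⁻¹ : ℝ) : EReal) * ENNReal.log (u n)

/-- `limsup_n (1/n) log u n` (in `EReal`). -/
def upRate (u : ℕ → ℝ≥0∞) : EReal :=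
  Filter.atTop.limsup fun n : ℕ => (((n : ℝ)⁻¹ : ℝ) : EReal) * ENNReal.log (u n)

/-- Lower spanning topological pressure `Q_low(T,f,Z)`; the limit as `ε → 0` is realised as a
supremum over `ε > 0`, the quantity being monotone in `ε`. -/
def Qlow (T : ∀ k, X k → X (k + 1)) (f : ∀ k, X k → ℝ) (Z : Set (X 0)) : EReal :=
  ⨆ (ε : ℝ) (_ : 0 < ε), lowRate fun n => Qn T f Z n ε

/-- Upper spanning topological pressure `Q_up(T,f,Z)`. -/
def Qup (T : ∀ k, X k → X (k + 1)) (f : ∀ k, X k → ℝ) (Z : Set (X 0)) : EReal :=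
  ⨆ (ε : ℝ) (_ : 0 < ε), upRate fun n => Qn T f Z n ε

/-- Lower separated topological pressure `P_low(T,f,Z)`. -/
def Plow (T : ∀ k, X k → X (k + 1)) (f : ∀ k, X k → ℝ) (Z : Set (X 0)) : EReal :=
  ⨆ (ε : ℝ) (_ : 0 < ε), lowRate fun n => Pn T f Z n ε

/-- Upper separated topological pressure `P_up(T,f,Z)`. -/
def Pup (T : ∀ k, X k → X (k + 1)) (f : ∀ k, X k → ℝ) (Z : Set (X 0)) : EReal :=
  ⨆ (ε : ℝ) (_ : 0 < ε), upRate fun n => Pn T f Z n ε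

/-- The critical value `inf {s : M s = 0}` of a "measure profile" `M`, as an extended real. -/
def crit (M : ℝ → ℝ≥0∞) : EReal :=
  sInf (Real.toEReal '' {s : ℝ | M s = 0})

/-- The critical value `sup {s : M s = ∞}` of a "measure profile" `M`, as an extended real. -/
def critSup (M : ℝ → ℝ≥0∞) : EReal :=
  sSup (Real.toEReal '' {s : ℝ | M s = ⊤})

/-- A countable family of Bowen balls (recorded by their (center, order) data) which is an
`(N,ε)`-cover of `Z`. -/
def IsBowenCover (T : ∀ k, X k → X (k + 1)) (N : ℕ) (ε : ℝ) (Z : Set (X 0))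
    (C : Set (X 0 × ℕ)) : Prop :=
  C.Countable ∧ (∀ p ∈ C, N ≤ p.2) ∧ Z ⊆ ⋃ p ∈ C, bowenBall T p.2 p.1 ε

/-- A countable disjoint family of closed Bowen balls with centers in `Z` and orders `≥ N`:
an `(N,ε)`-packing of `Z`. -/
def IsBowenPacking (T : ∀ k, X k → X (k + 1)) (N : ℕ) (ε : ℝ) (Z : Set (X 0))
    (P : Set (X 0 × ℕ)) : Prop :=
  P.Countable ∧ (∀ p ∈ P, p.1 ∈ Z ∧ N ≤ p.2) ∧
    ∀ p ∈ P, ∀ q ∈ P, p ≠ q →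
      Disjoint (bowenClosedBall T p.2 p.1 ε) (bowenClosedBall T q.2 q.1 ε)

/-- `Σ_i exp (-n_i s + S_{n_i}^T f (x_i))` over a family of (center, order) pairs. -/
def ballSum (T : ∀ k, X k → X (k + 1)) (f : ∀ k, X k → ℝ) (s : ℝ) (C : Set (X 0 × ℕ)) : ℝ≥0∞ :=
  ∑' p : C, ENNReal.ofReal (Real.exp (-(p.1.2 : ℝ) * s + birk T f p.1.2 p.1.1))

/-- The Hausdorff-type pre-measure `M^s_{N,ε}(T,f,Z)`. -/
def bowenPreMeas (T : ∀ k, X k → X (k + 1)) (f : ∀ k, X k → ℝ) (Z : Set (X 0))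
    (s : ℝ) (N : ℕ) (ε : ℝ) : ℝ≥0∞ :=
  ⨅ (C : Set (X 0 × ℕ)) (_ : IsBowenCover T N ε Z C), ballSum T f s C

/-- `M^s_ε(T,f,Z) = lim_{N → ∞} M^s_{N,ε}(T,f,Z)` (an increasing limit, i.e. a supremum). -/
def bowenMeas (T : ∀ k, X k → X (k + 1)) (f : ∀ k, X k → ℝ) (Z : Set (X 0))
    (s : ℝ) (ε : ℝ) : ℝ≥0∞ :=
  ⨆ N : ℕ, bowenPreMeas T f Z s N ε

/-- `P^B(T,f,Z,ε)`: the critical value of `s ↦ M^s_ε(T,f,Z)`. -/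
def PBe (T : ∀ k, X k → X (k + 1)) (f : ∀ k, X k → ℝ) (Z : Set (X 0)) (ε : ℝ) : EReal :=
  crit fun s => bowenMeas T f Z s ε

/-- The Bowen (Pesin–Pitskel') topological pressure `P^B(T,f,Z)`; the limit as `ε → 0` is
realised as a supremum over `ε > 0` by monotonicity. -/
def PB (T : ∀ k, X k → X (k + 1)) (f : ∀ k, X k → ℝ) (Z : Set (X 0)) : EReal :=
  ⨆ (ε : ℝ) (_ : 0 < ε), PBe T f Z ε

/-- The packing pre-measure `𝒫^s_{N,ε}(T,f,Z)`. -/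
def packPre (T : ∀ k, X k → X (k + 1)) (f : ∀ k, X k → ℝ) (Z : Set (X 0))
    (s : ℝ) (N : ℕ) (ε : ℝ) : ℝ≥0∞ :=
  ⨆ (P : Set (X 0 × ℕ)) (_ : IsBowenPacking T N ε Z P), ballSum T f s P

/-- The packing content `𝒫^s_{∞,ε}(T,f,Z) = lim_{N→∞} 𝒫^s_{N,ε}` (a decreasing limit, i.e. an
infimum). -/
def packContent (T : ∀ k, X k → X (k + 1)) (f : ∀ k, X k → ℝ) (Z : Set (X 0))
    (s : ℝ) (ε : ℝ) : ℝ≥0∞ :=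
  ⨅ N : ℕ, packPre T f Z s N ε

/-- The packing measure `𝒫^s_ε(T,f,Z)`, obtained from the content by countable decompositions. -/
def packMeas (T : ∀ k, X k → X (k + 1)) (f : ∀ k, X k → ℝ) (Z : Set (X 0))
    (s : ℝ) (ε : ℝ) : ℝ≥0∞ :=
  ⨅ (D : ℕ → Set (X 0)) (_ : Z ⊆ ⋃ i, D i), ∑' i, packContent T f (D i) s ε

/-- `P^P(T,f,Z,ε)`: the critical value of `s ↦ 𝒫^s_ε(T,f,Z)`. -/
def PPe (T : ∀ k, X k → X (k + 1)) (f : ∀ k, X k → ℝ) (Z : Set (X 0)) (ε : ℝ) : EReal :=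
  crit fun s => packMeas T f Z s ε

/-- The packing topological pressure `P^P(T,f,Z)`. -/
def PP (T : ∀ k, X k → X (k + 1)) (f : ∀ k, X k → ℝ) (Z : Set (X 0)) : EReal :=
  ⨆ (ε : ℝ) (_ : 0 < ε), PPe T f Z ε

end NDS


namespace NDSAux
open NDS

lemma sum_image_le {α β : Type*} [DecidableEq β] (s : Finset α) (φ : α → β) (h : β → ℝ≥0∞) :
    ∑ b ∈ s.image φ, h b ≤ ∑ a ∈ s, h (φ a) := by
  classical
  induction s using Finset.induction with
  | empty => simp
  | @insert a s hx ih =>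
      rw [Finset.image_insert, Finset.sum_insert hx]
      refine le_trans ?_ (add_le_add le_rfl ih)
      by_cases hmem : φ a ∈ Finset.image φ s
      · rw [Finset.insert_eq_self.mpr hmem]; exact le_add_self
      · rw [Finset.sum_insert hmem]

lemma tsum_image_le {α β : Type*} (φ : α → β) (C : Set α) (F : α → ℝ≥0∞) (G : β → ℝ≥0∞)
    (h : ∀ a ∈ C, G (φ a) = F a) : ∑' b : (φ '' C), G ↑b ≤ ∑' a : C, F ↑a := by
  have hsurj : Function.Surjective (fun a : C => (⟨φ a, ⟨a.1, a.2, rfl⟩⟩ : φ '' C)) := by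
    rintro ⟨b, a, ha, rfl⟩
    exact ⟨⟨a, ha⟩, rfl⟩
  calc ∑' b : (φ '' C), G ↑b ≤ ∑' a : C, G (φ ↑a) :=
        ENNReal.tsum_le_tsum_comp_of_surjective hsurj _
    _ = ∑' a : C, F ↑a := tsum_congr fun a => h a a.2

lemma tsum_image_eq {α β : Type*} (φ : α → β) (C : Set α) (F : α → ℝ≥0∞) (G : β → ℝ≥0∞)
    (hinj : Set.InjOn φ C) (h : ∀ a ∈ C, G (φ a) = F a) :
    ∑' b : (φ '' C), G ↑b = ∑' a : C, F ↑a := by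
  refine le_antisymm (tsum_image_le φ C F G h) ?_
  have hinj' : Function.Injective (fun a : C => (⟨φ a, ⟨a.1, a.2, rfl⟩⟩ : φ '' C)) :=
    fun a a' haa' => Subtype.ext (hinj a.2 a'.2 (congrArg Subtype.val haa'))
  calc ∑' a : C, F ↑a = ∑' a : C, G (φ ↑a) := tsum_congr fun a => (h a a.2).symm
    _ ≤ ∑' b : (φ '' C), G ↑b :=
        ENNReal.tsum_comp_le_tsum_of_injective hinj' (fun b => G ↑b)

lemma crit_mono {M M' : ℝ → ℝ≥0∞} (h : ∀ s, M s ≤ M' s) : crit M ≤ crit M' :=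
  sInf_le_sInf (Set.image_mono fun s hs => le_zero_iff.mp (hs ▸ h s))

lemma lowRate_mono {u v : ℕ → ℝ≥0∞} (h : ∀ n, u n ≤ v n) : lowRate u ≤ lowRate v :=
  Filter.liminf_le_liminf (Filter.Eventually.of_forall fun n =>
    mul_le_mul_of_nonneg_left (ENNReal.log_monotone (h n))
      (EReal.coe_nonneg.mpr (inv_nonneg.mpr (Nat.cast_nonneg n))))

lemma upRate_mono {u v : ℕ → ℝ≥0∞} (h : ∀ n, u n ≤ v n) : upRate u ≤ upRate v :=
  Filter.limsup_le_limsup (Filter.Eventually.of_forall fun n =>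
    mul_le_mul_of_nonneg_left (ENNReal.log_monotone (h n))
      (EReal.coe_nonneg.mpr (inv_nonneg.mpr (Nat.cast_nonneg n))))

section Semiconj

variable {X Y : ℕ → Type*} [∀ k, MetricSpace (X k)] [∀ k, MetricSpace (Y k)]
variable {T : ∀ k, X k → X (k + 1)} {R : ∀ k, Y k → Y (k + 1)} {π : ∀ k, X k → Y k}

lemma iter_semiconj (hsemi : ∀ k, ∀ x : X k, R k (π k x) = π (k + 1) (T k x))
    (n : ℕ) (x : X 0) : iter R n (π 0 x) = π n (iter T n x) := by
  induction n with
  | zero => rfl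
  | succ n ih =>
      show R n (iter R n (π 0 x)) = π (n + 1) (T n (iter T n x))
      rw [ih, hsemi]

lemma birk_comp (hsemi : ∀ k, ∀ x : X k, R k (π k x) = π (k + 1) (T k x))
    (g : ∀ k, Y k → ℝ) (n : ℕ) (x : X 0) :
    birk R g n (π 0 x) = birk T (fun k z => g k (π k z)) n x :=
  Finset.sum_congr rfl fun j _ => by rw [iter_semiconj hsemi]

lemma bowenDist_lt_iff {n : ℕ} {x y : X 0} {ε : ℝ} (hε : 0 < ε) :
    bowenDist T n x y < ε ↔ ∀ j ∈ Finset.range n, dist (iter T j x) (iter T j y) < ε := by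
  rw [bowenDist, ← Real.lt_toNNReal_iff_coe_lt,
    Finset.sup_lt_iff (show ⊥ < ε.toNNReal from Real.toNNReal_pos.mpr hε)]
  refine forall₂_congr fun j _ => ?_
  rw [Real.lt_toNNReal_iff_coe_lt, ← dist_nndist]

lemma bowenDist_transfer (hsemi : ∀ k, ∀ x : X k, R k (π k x) = π (k + 1) (T k x))
    {ε δ : ℝ} (hε : 0 < ε) (hδ : 0 < δ)
    (hmod : ∀ k, ∀ x y : X k, dist x y < δ → dist (π k x) (π k y) < ε)
    {n : ℕ} {x y : X 0} (h : bowenDist T n x y < δ) :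
    bowenDist R n (π 0 x) (π 0 y) < ε := by
  rw [bowenDist_lt_iff hε]
  intro j hj
  rw [iter_semiconj hsemi, iter_semiconj hsemi]
  exact hmod j _ _ ((bowenDist_lt_iff hδ).mp h j hj)

end Semiconj

end NDSAux

namespace NDSAux
open NDS

section Transfer

variable {X Y : ℕ → Type*} [∀ k, MetricSpace (X k)] [∀ k, MetricSpace (Y k)]
variable {T : ∀ k, X k → X (k + 1)} {R : ∀ k, Y k → Y (k + 1)} {π : ∀ k, X k → Y k}
variable (hsemi : ∀ k, ∀ x : X k, R k (π k x) = π (k + 1) (T k x))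
variable {ε δ : ℝ} (hε : 0 < ε) (hδ : 0 < δ)
variable (hmod : ∀ k, ∀ x y : X k, dist x y < δ → dist (π k x) (π k y) < ε)
variable (g : ∀ k, Y k → ℝ)

include hsemi hε hδ hmod

lemma Qn_le (Z : Set (X 0)) (n : ℕ) :
    Qn R g (π 0 '' Z) n ε ≤ Qn T (fun k z => g k (π k z)) Z n (δ / 2) := by
  classical
  refine le_iInf₂ fun F hF => ?_
  refine (iInf₂_le (F.image (π 0)) ?_).trans ?_
  · rintro w ⟨x, hx, rfl⟩
    obtain ⟨y, hyF, hxy⟩ := hF x hx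
    exact ⟨π 0 y, Finset.mem_image_of_mem _ hyF,
      (bowenDist_transfer hsemi hε hδ hmod (lt_of_le_of_lt hxy (half_lt_self hδ))).le⟩
  · calc partSum R g n (F.image (π 0))
        ≤ ∑ y ∈ F, ENNReal.ofReal (Real.exp (birk R g n (π 0 y))) :=
          sum_image_le F (π 0) _
      _ = partSum T (fun k z => g k (π k z)) n F :=
          Finset.sum_congr rfl fun y _ => by rw [birk_comp hsemi]

lemma Pn_le (Z : Set (X 0)) (n : ℕ) :
    Pn R g (π 0 '' Z) n ε ≤ Pn T (fun k z => g k (π k z)) Z n (δ / 2) := by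
  classical
  refine iSup₂_le fun E hE => ?_
  rcases E.eq_empty_or_nonempty with rfl | ⟨w0, hw0⟩
  · simp [partSum]
  · obtain ⟨x0, -, -⟩ := hE.1 (Finset.mem_coe.mpr hw0)
    haveI : Nonempty (X 0) := ⟨x0⟩
    set c : Y 0 → X 0 := Function.invFunOn (π 0) Z with hcdef
    have hkey : ∀ w ∈ E, c w ∈ Z ∧ π 0 (c w) = w := by
      intro w hw
      obtain ⟨x, hx, hxw⟩ := hE.1 (Finset.mem_coe.mpr hw)
      exact ⟨Function.invFunOn_mem ⟨x, hx, hxw⟩, Function.invFunOn_eq ⟨x, hx, hxw⟩⟩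
    refine le_iSup₂_of_le (E.image c) ⟨?_, ?_⟩ (le_of_eq ?_)
    · intro x hx
      simp only [Finset.coe_image, Set.mem_image, Finset.mem_coe] at hx
      obtain ⟨w, hw, rfl⟩ := hx
      exact (hkey w hw).1
    · intro x hx y hy hxy
      obtain ⟨w, hw, rfl⟩ := Finset.mem_image.mp hx
      obtain ⟨w', hw', rfl⟩ := Finset.mem_image.mp hy
      have hww' : w ≠ w' := fun h => hxy (by rw [h])
      have hsep := hE.2 w hw w' hw' hww'
      by_contra hle
      push_neg at hle
      have hlt := bowenDist_transfer hsemi hε hδ hmod (lt_of_le_of_lt hle (half_lt_self hδ))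
      rw [(hkey w hw).2, (hkey w' hw').2] at hlt
      exact absurd hsep (not_lt.mpr hlt.le)
    · rw [partSum, partSum,
        Finset.sum_image (fun w hw w' hw' h => by
          rw [← (hkey w hw).2, ← (hkey w' hw').2, h])]
      refine Finset.sum_congr rfl fun w hw => ?_
      have hb := birk_comp hsemi g n (c w)
      rw [(hkey w hw).2] at hb
      rw [hb]

lemma bowenPreMeas_le (Z : Set (X 0)) (s : ℝ) (N : ℕ) :
    bowenPreMeas R g (π 0 '' Z) s N ε ≤ bowenPreMeas T (fun k z => g k (π k z)) Z s N δ := by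
  refine le_iInf₂ fun C hC => ?_
  refine (iInf₂_le ((fun p : X 0 × ℕ => (π 0 p.1, p.2)) '' C) ?_).trans ?_
  · refine ⟨hC.1.image _, ?_, ?_⟩
    · rintro q ⟨p, hp, rfl⟩
      exact hC.2.1 p hp
    · rintro w ⟨x, hx, rfl⟩
      obtain ⟨p, hp, hxp⟩ := Set.mem_iUnion₂.mp (hC.2.2 hx)
      exact Set.mem_iUnion₂.mpr ⟨(π 0 p.1, p.2), Set.mem_image_of_mem _ hp,
        bowenDist_transfer hsemi hε hδ hmod hxp⟩
  · refine tsum_image_le (fun p : X 0 × ℕ => (π 0 p.1, p.2)) C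
      (fun p : X 0 × ℕ =>
        ENNReal.ofReal (Real.exp (-(p.2 : ℝ) * s + birk T (fun k z => g k (π k z)) p.2 p.1)))
      (fun q : Y 0 × ℕ => ENNReal.ofReal (Real.exp (-(q.2 : ℝ) * s + birk R g q.2 q.1)))
      fun p _ => ?_
    show ENNReal.ofReal (Real.exp (-(p.2 : ℝ) * s + birk R g p.2 (π 0 p.1)))
        = ENNReal.ofReal (Real.exp (-(p.2 : ℝ) * s + birk T (fun k z => g k (π k z)) p.2 p.1))
    rw [birk_comp hsemi]

lemma packPre_le (S : Set (X 0)) (s : ℝ) (N : ℕ) :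
    packPre R g (π 0 '' S) s N ε ≤ packPre T (fun k z => g k (π k z)) S s N (δ / 2) := by
  classical
  refine iSup₂_le fun P hP => ?_
  rcases P.eq_empty_or_nonempty with rfl | ⟨p0, hp0⟩
  · simp [ballSum]
  · obtain ⟨x0, -, -⟩ := (hP.2.1 p0 hp0).1
    haveI : Nonempty (X 0) := ⟨x0⟩
    set c : Y 0 → X 0 := Function.invFunOn (π 0) S with hcdef
    have hkey : ∀ p ∈ P, c (Prod.fst p) ∈ S ∧ π 0 (c (Prod.fst p)) = Prod.fst p := by
      intro p hp
      obtain ⟨x, hx, hxp⟩ := (hP.2.1 p hp).1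
      exact ⟨Function.invFunOn_mem ⟨x, hx, hxp⟩, Function.invFunOn_eq ⟨x, hx, hxp⟩⟩
    set ψ : Y 0 × ℕ → X 0 × ℕ := fun q => (c q.1, q.2) with hψ
    have hinj : Set.InjOn ψ P := by
      intro p hp q hq hpq
      obtain ⟨h1, h2⟩ := Prod.ext_iff.mp hpq
      have h1' : p.1 = q.1 := by
        rw [← (hkey p hp).2, ← (hkey q hq).2]
        exact congrArg (π 0) h1
      exact Prod.ext h1' h2
    refine le_trans (le_of_eq ?_) (le_iSup₂ (ψ '' P) ?_)
    · refine (tsum_image_eq ψ P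
        (fun q : Y 0 × ℕ => ENNReal.ofReal (Real.exp (-(q.2 : ℝ) * s + birk R g q.2 q.1)))
        (fun p : X 0 × ℕ => ENNReal.ofReal
          (Real.exp (-(p.2 : ℝ) * s + birk T (fun k z => g k (π k z)) p.2 p.1)))
        hinj fun p hp => ?_).symm
      show ENNReal.ofReal
            (Real.exp (-(p.2 : ℝ) * s + birk T (fun k z => g k (π k z)) p.2 (c p.1)))
          = ENNReal.ofReal (Real.exp (-(p.2 : ℝ) * s + birk R g p.2 p.1))
      rw [← birk_comp hsemi, (hkey p hp).2]
    · refine ⟨hP.1.image _, ?_, ?_⟩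
      · rintro q ⟨p, hp, rfl⟩
        exact ⟨(hkey p hp).1, (hP.2.1 p hp).2⟩
      · rintro q' ⟨p, hp, rfl⟩ q'' ⟨q, hq, rfl⟩ hne
        have hpq : p ≠ q := fun h => hne (by rw [h])
        have hdisj := hP.2.2 p hp q hq hpq
        rw [Set.disjoint_left]
        intro z hz1 hz2
        have h1 : bowenDist R p.2 p.1 (π 0 z) < ε := by
          have := bowenDist_transfer hsemi hε hδ hmod
            (lt_of_le_of_lt (hz1 : bowenDist T p.2 (c p.1) z ≤ δ / 2) (half_lt_self hδ))
          rwa [(hkey p hp).2] at this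
        have h2 : bowenDist R q.2 q.1 (π 0 z) < ε := by
          have := bowenDist_transfer hsemi hε hδ hmod
            (lt_of_le_of_lt (hz2 : bowenDist T q.2 (c q.1) z ≤ δ / 2) (half_lt_self hδ))
          rwa [(hkey q hq).2] at this
        exact Set.disjoint_left.mp hdisj h1.le h2.le

lemma packMeas_le (Z : Set (X 0)) (s : ℝ) :
    packMeas R g (π 0 '' Z) s ε ≤ packMeas T (fun k z => g k (π k z)) Z s (δ / 2) := by
  refine le_iInf₂ fun D hD => ?_
  refine (iInf₂_le (fun i => π 0 '' D i) ?_).trans ?_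
  · calc π 0 '' Z ⊆ π 0 '' ⋃ i, D i := Set.image_mono hD
      _ = ⋃ i, π 0 '' D i := Set.image_iUnion
  · exact ENNReal.tsum_le_tsum fun i =>
      iInf_mono fun N => packPre_le hsemi hε hδ hmod g (D i) s N

end Transfer

end NDSAux

namespace NDSAux
open NDS

lemma oneSided {X Y : ℕ → Type*} [∀ k, MetricSpace (X k)] [∀ k, MetricSpace (Y k)]
    (T : ∀ k, X k → X (k + 1)) (R : ∀ k, Y k → Y (k + 1)) (π : ∀ k, X k → Y k)
    (hsemi : ∀ k, ∀ x : X k, R k (π k x) = π (k + 1) (T k x))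
    (hπe : ∀ ε : ℝ, 0 < ε → ∃ δ : ℝ, 0 < δ ∧ ∀ k, ∀ x y : X k,
      dist x y < δ → dist (π k x) (π k y) < ε)
    (g : ∀ k, Y k → ℝ) (Z : Set (X 0)) :
    Qlow R g (π 0 '' Z) ≤ Qlow T (fun k x => g k (π k x)) Z ∧
    Qup R g (π 0 '' Z) ≤ Qup T (fun k x => g k (π k x)) Z ∧
    Plow R g (π 0 '' Z) ≤ Plow T (fun k x => g k (π k x)) Z ∧
    Pup R g (π 0 '' Z) ≤ Pup T (fun k x => g k (π k x)) Z ∧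
    PB R g (π 0 '' Z) ≤ PB T (fun k x => g k (π k x)) Z ∧
    PP R g (π 0 '' Z) ≤ PP T (fun k x => g k (π k x)) Z := by
  refine ⟨?_, ?_, ?_, ?_, ?_, ?_⟩ <;>
    refine iSup₂_le fun ε hε => ?_ <;>
    obtain ⟨δ, hδ, hmod⟩ := hπe ε hε
  · exact le_trans (lowRate_mono fun n => Qn_le hsemi hε hδ hmod g Z n)
      (le_iSup₂_of_le (δ / 2) (half_pos hδ) le_rfl)
  · exact le_trans (upRate_mono fun n => Qn_le hsemi hε hδ hmod g Z n)
      (le_iSup₂_of_le (δ / 2) (half_pos hδ) le_rfl)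
  · exact le_trans (lowRate_mono fun n => Pn_le hsemi hε hδ hmod g Z n)
      (le_iSup₂_of_le (δ / 2) (half_pos hδ) le_rfl)
  · exact le_trans (upRate_mono fun n => Pn_le hsemi hε hδ hmod g Z n)
      (le_iSup₂_of_le (δ / 2) (half_pos hδ) le_rfl)
  · exact le_trans
      (crit_mono fun s => iSup_mono fun N => bowenPreMeas_le hsemi hε hδ hmod g Z s N)
      (le_iSup₂_of_le δ hδ le_rfl)
  · exact le_trans (crit_mono fun s => packMeas_le hsemi hε hδ hmod g Z s)
      (le_iSup₂_of_le (δ / 2) (half_pos hδ) le_rfl)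

end NDSAux


/-- **invariance under equiconjugacies.** Let `π = {π_k}` be an
equisemiconjugacy from `(X,T)` to `(Y,R)` and `g` an equicontinuous potential on `Y`. Then
for each of the six pressures `P`, `P(T, π*g, Z) ≥ P(R, g, π_0(Z))`; if `π` is moreover an
equiconjugacy (each `π_k` invertible with equicontinuous inverses), equality holds. -/
theorem pressure_equiconjugacy_invariance {X Y : ℕ → Type*} [∀ k, MetricSpace (X k)]
    [∀ k, CompactSpace (X k)] [∀ k, MetricSpace (Y k)] [∀ k, CompactSpace (Y k)]
    (T : ∀ k, X k → X (k + 1)) (hT : ∀ k, Continuous (T k))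
    (R : ∀ k, Y k → Y (k + 1)) (hR : ∀ k, Continuous (R k))
    (π : ∀ k, X k → Y k) (hπc : ∀ k, Continuous (π k))
    (hπs : ∀ k, Function.Surjective (π k))
    (hsemi : ∀ k, ∀ x : X k, R k (π k x) = π (k + 1) (T k x))
    (hπe : ∀ ε : ℝ, 0 < ε → ∃ δ : ℝ, 0 < δ ∧ ∀ k, ∀ x y : X k,
      dist x y < δ → dist (π k x) (π k y) < ε)
    (g : ∀ k, Y k → ℝ) (hg : ∀ k, Continuous (g k)) (hge : NDS.EquicontPotential g)
    (Z : Set (X 0)) :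
    (NDS.Qlow R g (π 0 '' Z) ≤ NDS.Qlow T (fun k x => g k (π k x)) Z ∧
     NDS.Qup R g (π 0 '' Z) ≤ NDS.Qup T (fun k x => g k (π k x)) Z ∧
     NDS.Plow R g (π 0 '' Z) ≤ NDS.Plow T (fun k x => g k (π k x)) Z ∧
     NDS.Pup R g (π 0 '' Z) ≤ NDS.Pup T (fun k x => g k (π k x)) Z ∧
     NDS.PB R g (π 0 '' Z) ≤ NDS.PB T (fun k x => g k (π k x)) Z ∧
     NDS.PP R g (π 0 '' Z) ≤ NDS.PP T (fun k x => g k (π k x)) Z) ∧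
    ((∃ σ : ∀ k, Y k → X k,
        (∀ k, Function.LeftInverse (σ k) (π k)) ∧
        (∀ k, Function.RightInverse (σ k) (π k)) ∧
        (∀ ε : ℝ, 0 < ε → ∃ δ : ℝ, 0 < δ ∧ ∀ k, ∀ x y : Y k,
          dist x y < δ → dist (σ k x) (σ k y) < ε)) →
      (NDS.Qlow T (fun k x => g k (π k x)) Z = NDS.Qlow R g (π 0 '' Z) ∧
       NDS.Qup T (fun k x => g k (π k x)) Z = NDS.Qup R g (π 0 '' Z) ∧
       NDS.Plow T (fun k x => g k (π k x)) Z = NDS.Plow R g (π 0 '' Z) ∧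
       NDS.Pup T (fun k x => g k (π k x)) Z = NDS.Pup R g (π 0 '' Z) ∧
       NDS.PB T (fun k x => g k (π k x)) Z = NDS.PB R g (π 0 '' Z) ∧
       NDS.PP T (fun k x => g k (π k x)) Z = NDS.PP R g (π 0 '' Z))) := by
  have part1 := NDSAux.oneSided T R π hsemi hπe g Z
  refine ⟨part1, ?_⟩
  rintro ⟨σ, hσl, hσr, hσe⟩
  have hsemi' : ∀ k, ∀ y : Y k, T k (σ k y) = σ (k + 1) (R k y) := by
    intro k y
    have h := hsemi k (σ k y)
    rw [hσr k y] at h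
    have h2 := congrArg (σ (k + 1)) h
    rw [hσl (k + 1) (T k (σ k y))] at h2
    exact h2.symm
  have key := NDSAux.oneSided R T σ hsemi' hσe (fun k x => g k (π k x)) (π 0 '' Z)
  have himg : σ 0 '' (π 0 '' Z) = Z := by
    rw [← Set.image_comp]
    have h : (σ 0 ∘ π 0) = id := funext fun x => hσl 0 x
    rw [h, Set.image_id]
  have hpot : (fun k y => g k (π k (σ k y))) = g := by
    funext k y
    rw [hσr k y]
  simp only [himg, hpot] at key
  exact ⟨le_antisymm key.1 part1.1, le_antisymm key.2.1 part1.2.1,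
    le_antisymm key.2.2.1 part1.2.2.1, le_antisymm key.2.2.2.1 part1.2.2.2.1,
    le_antisymm key.2.2.2.2.1 part1.2.2.2.2.1, le_antisymm key.2.2.2.2.2 part1.2.2.2.2.2⟩
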